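/- For every real x ≥ 0, the function t ↦ g̃(t,x) is represented on the interval (0,2) by its Taylor series centered at t₀ = 1: for every t ∈ (0,2), the series ∑_{n=0}^{∞} (g̃^{(n)}(1,x)/n!)·(t−1)^n converges and its sum equals g̃(t,x). -/

import Mathlib

/-- `g̃(t,x) = t^{-1/2} · exp(-x²/t)`. -/
noncomputable def gTilde (t x : ℝ) : ℝ := t ^ (-(1 / 2) : ℝ) * Real.exp (-x ^ 2 / t)

open Complex

noncomputable def Fc (x : ℝ) (z : ℂ) : ℂ := z ^ (-(1 / 2) : ℂ) * Complex.exp (-(x : ℂ) ^ 2 / z)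

lemma Fc_diffOn (x : ℝ) : DifferentiableOn ℂ (Fc x) {z : ℂ | 0 < z.re} := by
  intro z hz
  have hz0 : z ≠ 0 := fun h => by simp [h] at hz
  apply DifferentiableAt.differentiableWithinAt
  apply DifferentiableAt.mul
  · exact (differentiableAt_id.cpow (differentiableAt_const _) (Or.inl hz))
  · exact (Complex.differentiable_exp.differentiableAt).comp z
      ((differentiableAt_const _).div differentiableAt_id hz0)

lemma Fc_analytic (x : ℝ) : AnalyticOnNhd ℂ (Fc x) {z : ℂ | 0 < z.re} :=
  (Fc_diffOn x).analyticOnNhd (continuous_re.isOpen_preimage _ isOpen_Ioi)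

lemma Fc_iter_analytic (x : ℝ) (n : ℕ) :
    AnalyticOnNhd ℂ (iteratedDeriv n (Fc x)) {z : ℂ | 0 < z.re} := by
  induction n with
  | zero => simpa using Fc_analytic x
  | succ m ihm => rw [iteratedDeriv_succ]; exact ihm.deriv

lemma Fc_real (x : ℝ) {t : ℝ} (ht : 0 < t) : Fc x ↑t = ↑(gTilde t x) := by
  unfold Fc gTilde
  rw [Complex.ofReal_mul, Complex.ofReal_cpow ht.le]
  push_cast
  ring_nf

lemma key (x : ℝ) (n : ℕ) {t : ℝ} (ht : 0 < t) :
    iteratedDeriv n (Fc x) ↑t = ↑(iteratedDeriv n (fun s => gTilde s x) t) := by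
  induction n generalizing t with
  | zero => simpa using Fc_real x ht
  | succ n ih =>
    rw [iteratedDeriv_succ, iteratedDeriv_succ]
    set G := iteratedDeriv n (Fc x) with hG
    set g := iteratedDeriv n (fun s => gTilde s x) with hg
    have htmem : (↑t : ℂ) ∈ {z : ℂ | 0 < z.re} := by simpa using ht
    have hGder : HasDerivAt G (deriv G ↑t) ↑t :=
      ((Fc_iter_analytic x n _ htmem).differentiableAt).hasDerivAt
    set c := deriv G ↑t with hc
    have hR : HasDerivAt (fun y : ℝ => G ↑y) c t := hGder.comp_ofReal
    have heq : (fun y : ℝ => (↑(g y) : ℂ)) =ᶠ[nhds t] fun y : ℝ => G ↑y :=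
      Filter.eventuallyEq_of_mem (Ioi_mem_nhds ht) (fun y hy => (ih hy).symm)
    have hR' : HasDerivAt (fun y : ℝ => (↑(g y) : ℂ)) c t := hR.congr_of_eventuallyEq heq
    have hre : HasDerivAt g c.re t := by
      have := Complex.reCLM.hasFDerivAt.comp_hasDerivAt t hR'
      simpa [Function.comp_def] using this
    have him : HasDerivAt (fun _ : ℝ => (0 : ℝ)) c.im t := by
      have := Complex.imCLM.hasFDerivAt.comp_hasDerivAt t hR'
      simpa [Function.comp_def] using this
    have himz : c.im = 0 := by
      have := him.unique (hasDerivAt_const t (0 : ℝ))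
      simpa using this
    rw [hre.deriv]
    exact Complex.ext (by simp) (by simpa using himz)

/-- For every `x ≥ 0` and every `t ∈ (0,2)`, the Taylor series of `t ↦ g̃(t,x)` centered
at `t₀ = 1` converges and its sum equals `g̃(t,x)`. -/
theorem stmt_7 (x : ℝ) (hx : 0 ≤ x) (t : ℝ) (ht : t ∈ Set.Ioo (0 : ℝ) 2) :
    HasSum
      (fun n : ℕ => iteratedDeriv n (fun s => gTilde s x) 1 / (n.factorial : ℝ) * (t - 1) ^ n)
      (gTilde t x) := by
  obtain ⟨ht0, ht2⟩ := ht
  have hball : (↑t : ℂ) ∈ Metric.ball (1 : ℂ) 1 := by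
    rw [Metric.mem_ball, Complex.dist_eq]
    have : (↑t : ℂ) - 1 = ((t - 1 : ℝ) : ℂ) := by push_cast; ring
    rw [this, Complex.norm_real, Real.norm_eq_abs, abs_lt]
    constructor <;> linarith
  have hsub : Metric.ball (1 : ℂ) 1 ⊆ {z : ℂ | 0 < z.re} := by
    intro z hz
    rw [Metric.mem_ball, Complex.dist_eq] at hz
    have h2 : |(z - 1).re| ≤ ‖z - 1‖ := Complex.abs_re_le_norm _
    simp only [Complex.sub_re, Complex.one_re] at h2
    have := (abs_lt.mp (h2.trans_lt hz)).1
    simp only [Set.mem_setOf_eq]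
    linarith
  have hdiff : DifferentiableOn ℂ (Fc x) (Metric.ball (1 : ℂ) 1) := (Fc_diffOn x).mono hsub
  have H := Complex.hasSum_taylorSeries_on_ball hdiff hball
  rw [Fc_real x ht0] at H
  have hkey : ∀ n : ℕ, iteratedDeriv n (Fc x) 1 =
      ↑(iteratedDeriv n (fun s => gTilde s x) 1) := by
    intro n
    have := key x n (t := 1) one_pos
    simpa using this
  have heq : (fun n : ℕ => ((iteratedDeriv n (fun s => gTilde s x) 1 / (n.factorial : ℝ)
        * (t - 1) ^ n : ℝ) : ℂ))
      = fun n : ℕ => (n.factorial : ℂ)⁻¹ • ((↑t : ℂ) - 1) ^ n • iteratedDeriv n (Fc x) 1 := by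
    funext n
    rw [hkey, smul_eq_mul, smul_eq_mul]
    push_cast
    ring
  exact hasSum_ofReal.mp (heq ▸ H)
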